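/- The class ℱ of forest tournaments contains the tournaments U_3 and N, but contains none of the tournaments D_3, S_3, Δ_2. -/

import Mathlib

/-- A tournament: a finite vertex type with an orientation of each pair of
distinct vertices. -/
structure Tournament : Type 1 where
  V : Type
  [fintypeV : Fintype V]
  adj : V → V → Prop
  irrefl : ∀ v, ¬ adj v v
  total : ∀ u v, u ≠ v → adj u v ∨ adj v u
  asymm : ∀ u v, adj u v → ¬ adj v u

attribute [instance] Tournament.fintypeV

namespace Tournament

/-- A set of vertices is transitive: the induced subtournament has no directed
cycle (equivalently, the adjacency relation is transitive on it). -/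
def IsTransSet (T : Tournament) (S : Set T.V) : Prop :=
  ∀ a ∈ S, ∀ b ∈ S, ∀ c ∈ S, T.adj a b → T.adj b c → T.adj a c

/-- The chromatic number of a tournament: least number of transitive sets
partitioning the vertex set. -/
noncomputable def chromNum (T : Tournament) : ℕ :=
  sInf {k | ∃ c : T.V → Fin k, ∀ i, T.IsTransSet {v | c v = i}}

/-- `T.Contains S`: `S` is isomorphic to a subtournament of `T`. -/
def Contains (T S : Tournament) : Prop :=
  ∃ f : S.V → T.V, Function.Injective f ∧ ∀ u v, S.adj u v ↔ T.adj (f u) (f v)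

/-- `T.Iso S`: `T` and `S` are isomorphic tournaments. -/
def Iso (T S : Tournament) : Prop :=
  ∃ f : S.V → T.V, Function.Bijective f ∧ ∀ u v, S.adj u v ↔ T.adj (f u) (f v)

/-- A set of tournaments is heroic if excluding all its members bounds the
chromatic number. -/
def Heroic (H : Set Tournament) : Prop :=
  ∃ c, ∀ T : Tournament, (∀ X ∈ H, ¬ T.Contains X) → T.chromNum ≤ c

/-- A tournament is a hero if `{H}` is heroic. -/
def IsHero (H : Tournament) : Prop :=
  ∃ c, ∀ T : Tournament, ¬ T.Contains H → T.chromNum ≤ c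

/-- A class of tournaments is hereditary if closed under subtournaments up to
isomorphism. -/
def Hereditary (C : Set Tournament) : Prop :=
  ∀ T ∈ C, ∀ S : Tournament, T.Contains S → S ∈ C

def StronglyConnected (T : Tournament) : Prop :=
  ∀ u v : T.V, Relation.ReflTransGen T.adj u v

/-- A transitive tournament (no directed cycle). -/
def IsTransTour (T : Tournament) : Prop :=
  ∀ a b c : T.V, T.adj a b → T.adj b c → T.adj a c

/-- Direction rule for Δ-partitions with 0-based part-indices (a part is at an
odd position in the 1-based sense iff its 0-based index is even).
`deltaDir i j` holds iff part `i` is complete to part `j`: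
for `i < j`, part `j` beats part `i` iff both positions are (1-based) odd. -/
def deltaDir {m : ℕ} (i j : Fin m) : Prop :=
  (i < j ∧ ¬ (Even i.1 ∧ Even j.1)) ∨ (j < i ∧ (Even i.1 ∧ Even j.1))

theorem deltaDir_irrefl {m : ℕ} (i : Fin m) : ¬ deltaDir i i := by
  rintro (⟨h, _⟩ | ⟨h, _⟩) <;> exact lt_irrefl _ h

theorem deltaDir_total {m : ℕ} {i j : Fin m} (h : i ≠ j) : deltaDir i j ∨ deltaDir j i := by
  rcases lt_or_gt_of_ne h with hl | hl
  · by_cases he : Even i.1 ∧ Even j.1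
    · exact Or.inr (Or.inr ⟨hl, he.2, he.1⟩)
    · exact Or.inl (Or.inl ⟨hl, he⟩)
  · by_cases he : Even i.1 ∧ Even j.1
    · exact Or.inl (Or.inr ⟨hl, he⟩)
    · exact Or.inr (Or.inl ⟨hl, fun hc => he ⟨hc.2, hc.1⟩⟩)

theorem deltaDir_asymm {m : ℕ} {i j : Fin m} (h : deltaDir i j) : ¬ deltaDir j i := by
  rcases h with ⟨h1, h2⟩ | ⟨h1, h2⟩ <;> rintro (⟨g1, g2⟩ | ⟨g1, g2⟩)
  · exact lt_asymm h1 g1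
  · exact h2 ⟨g2.2, g2.1⟩
  · exact g2 ⟨h2.2, h2.1⟩
  · exact lt_asymm h1 g1

/-- The tournament `Δ(F 0, F 1, …, F (m-1))` given by a Δ-partition rule:
within a part use the part's edges; between parts, edges follow `deltaDir`.
For `m = 3` this is the trisection `Δ(A,B,C)` (`X ⇒ Y`, `Y ⇒ Z`, `Z ⇒ X`),
and for `m = 2` it is `F 0 ⇒ F 1`. -/
def deltaSum {m : ℕ} (F : Fin m → Tournament) : Tournament where
  V := (i : Fin m) × (F i).V
  adj x y := deltaDir x.1 y.1 ∨
    ∃ (i : Fin m) (u v : (F i).V), (F i).adj u v ∧ x = ⟨i, u⟩ ∧ y = ⟨i, v⟩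
  irrefl := by
    rintro x (h | ⟨i, u, v, hadj, rfl, h2⟩)
    · exact deltaDir_irrefl _ h
    · injection h2 with h h'
      subst h'
      exact (F i).irrefl u hadj
  total := by
    rintro ⟨i, a⟩ ⟨j, b⟩ hne
    by_cases hij : i = j
    · subst hij
      have hab : a ≠ b := fun h => hne (by rw [h])
      rcases (F i).total a b hab with h | h
      · exact Or.inl (Or.inr ⟨i, a, b, h, rfl, rfl⟩)
      · exact Or.inr (Or.inr ⟨i, b, a, h, rfl, rfl⟩)
    · rcases deltaDir_total hij with h | h
      · exact Or.inl (Or.inl h)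
      · exact Or.inr (Or.inl h)
  asymm := by
    rintro x y hxy hyx
    rcases hxy with h | ⟨i, u, v, hadj, rfl, rfl⟩
    · rcases hyx with g | ⟨j, p, q, gadj, rfl, rfl⟩
      · exact deltaDir_asymm h g
      · exact deltaDir_irrefl _ h
    · rcases hyx with g | ⟨j, p, q, gadj, h1, h2⟩
      · exact deltaDir_irrefl _ g
      · injection h1 with hij hp
        subst hij
        obtain rfl := eq_of_heq hp
        injection h2 with h h'
        subst h'
        exact (F i).asymm u v hadj gadj

/-- The one-vertex tournament `I`. -/
def oneTour : Tournament where
  V := Unit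
  adj _ _ := False
  irrefl := fun _ h => h
  total := fun u v h => (h (Subsingleton.elim u v)).elim
  asymm := fun _ _ h => h.elim

/-- The transitive tournament `L k` on `k` vertices. -/
def linTour (k : ℕ) : Tournament where
  V := Fin k
  adj i j := i < j
  irrefl := fun v => lt_irrefl v
  total := fun _ _ h => lt_or_gt_of_ne h
  asymm := fun _ _ h => lt_asymm h

/-- `Dtour n` is the tournament `D_n`: `D_1 = I`, `D_n = Δ(I, D_{n-1}, D_{n-1})`. -/
def Dtour : ℕ → Tournament
  | 0 => oneTour
  | 1 => oneTour
  | n + 2 => deltaSum ![oneTour, Dtour (n + 1), Dtour (n + 1)]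

/-- `Atour n` is the tournament `A_n`: `A_1 = I`, and `A_n` is a Δ-sum with
`2n-1` parts, the (1-based) odd positions being single vertices and the even
positions copies of `A_{n-1}`. -/
def Atour : ℕ → Tournament
  | 0 => oneTour
  | 1 => oneTour
  | n + 2 =>
      deltaSum fun t : Fin (2 * (n + 2) - 1) => if Even t.1 then oneTour else Atour (n + 1)

/-- `Utour n` is the tournament `U_n = Δ(I, I, …, I)` with `2n-1` one-vertex parts. -/
def Utour (n : ℕ) : Tournament :=
  deltaSum fun _ : Fin (2 * n - 1) => oneTour

/-- `𝒟`: the closure of `{D_n : n ≥ 1}` under subtournaments up to isomorphism. -/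
def classD : Set Tournament :=
  {T | ∃ n : ℕ, 1 ≤ n ∧ (Dtour n).Contains T}

/-- `𝒜`: the closure of `{A_n : n ≥ 1}` under subtournaments up to isomorphism. -/
def classA : Set Tournament :=
  {T | ∃ n : ℕ, 1 ≤ n ∧ (Atour n).Contains T}

/-- `Δ₂ = Δ(L₂, L₂, L₂)`. -/
def delta2 : Tournament :=
  deltaSum ![linTour 2, linTour 2, linTour 2]

/-- The tournament `N`. -/
def Ntour : Tournament where
  V := Fin 5
  adj i j :=
    ![![false, true, false, true, false],
      ![false, false, true, true, true],
      ![true, false, false, true, true],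
      ![false, false, false, false, true],
      ![true, false, false, false, false]] i j = true
  irrefl := by decide
  total := by decide
  asymm := by decide

/-- The tournament `S₃`: `v_i → v_j` iff `j - i ∈ {1, 2} (mod 5)`. -/
def Stour3 : Tournament where
  V := Fin 5
  adj i j := (j.1 + 5 - i.1) % 5 = 1 ∨ (j.1 + 5 - i.1) % 5 = 2
  irrefl := by decide
  total := by decide
  asymm := by decide

/-- A vertex `v` outside `S` is mixed on `S` if it has both an out-neighbor and
an in-neighbor in `S`. -/
def MixedOn (T : Tournament) (v : T.V) (S : Set T.V) : Prop :=
  (∃ s ∈ S, T.adj v s) ∧ (∃ s ∈ S, T.adj s v)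

/-- A homogeneous set: `1 < |S| < |V(T)|` and no vertex outside `S` is mixed on `S`. -/
def Homog (T : Tournament) (S : Set T.V) : Prop :=
  1 < S.ncard ∧ S.ncard < Nat.card T.V ∧ ∀ v ∉ S, ¬ T.MixedOn v S

/-- A prime tournament has no homogeneous set. -/
def Prime (T : Tournament) : Prop := ¬ ∃ S : Set T.V, T.Homog S

/-- `P` is a Δ-partition of `T` with parts `P 0, …, P (m-1)`:
the parts are nonempty, partition `V(T)`, and all edges between distinct parts
follow the rule `deltaDir`. -/
def IsDeltaPartition (T : Tournament) {m : ℕ} (P : Fin m → Set T.V) : Prop :=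
  (∀ i, (P i).Nonempty) ∧
  (∀ v : T.V, ∃! i, v ∈ P i) ∧
  (∀ i j, i ≠ j → ∀ u ∈ P i, ∀ v ∈ P j, (T.adj u v ↔ deltaDir i j))

/-- The induced subtournament on a set of vertices. -/
noncomputable def induce (T : Tournament) (S : Set T.V) : Tournament where
  V := ↥S
  fintypeV := (Set.toFinite S).fintype
  adj u v := T.adj u.1 v.1
  irrefl := fun v => T.irrefl v.1
  total := fun u v h => T.total u.1 v.1 (fun hh => h (Subtype.ext hh))
  asymm := fun u v h => T.asymm u.1 v.1 h

/-- `u` and `v` are joined by an edge of the backedge graph of the ordering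
given by the list `l`: the `T`-edge between them goes backwards in `l`. -/
def BackAdj (T : Tournament) (l : List T.V) (u v : T.V) : Prop :=
  (T.adj u v ∧ [v, u].Sublist l) ∨ (T.adj v u ∧ [u, v].Sublist l)

/-- The backedge graph `B_σ(T)` of the ordering `σ = l`. -/
def backGraph (T : Tournament) (l : List T.V) : SimpleGraph T.V where
  Adj u v := T.BackAdj l u v
  symm := by
    constructor
    intro u v h
    rcases h with ⟨h, s⟩ | ⟨h, s⟩
    · exact Or.inr ⟨h, s⟩
    · exact Or.inl ⟨h, s⟩
  loopless := by
    constructor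
    intro v h
    rcases h with ⟨h, _⟩ | ⟨h, _⟩ <;> exact T.irrefl v h

/-- Forest orderings: a one-element ordering is a forest ordering, and the
concatenation `l₁ ++ l₂` of two nonempty forest orderings is one provided no
two edges of the backedge graph going between `l₁` and `l₂` lie in the same
connected component of the backedge graph. -/
inductive IsForestOrdering (T : Tournament) : List T.V → Prop
  | single (v : T.V) : IsForestOrdering T [v]
  | split (l₁ l₂ : List T.V) (h₁ : l₁ ≠ []) (h₂ : l₂ ≠ [])
      (hsep : ∀ a ∈ l₁, ∀ b ∈ l₂, ∀ c ∈ l₁, ∀ d ∈ l₂,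
        T.BackAdj (l₁ ++ l₂) a b → T.BackAdj (l₁ ++ l₂) c d →
        Relation.ReflTransGen (T.BackAdj (l₁ ++ l₂)) a c → a = c ∧ b = d)
      (f₁ : IsForestOrdering T l₁) (f₂ : IsForestOrdering T l₂) :
      IsForestOrdering T (l₁ ++ l₂)

/-- A forest tournament: one admitting a forest ordering of its vertex set. -/
def IsForestTournament (T : Tournament) : Prop :=
  ∃ l : List T.V, l.Nodup ∧ (∀ v, v ∈ l) ∧ IsForestOrdering T l

/-- The set of ordered pairs realizing backedges between `l₁` and `l₂`. -/
def splitEdges (T : Tournament) (l l₁ l₂ : List T.V) : Set (T.V × T.V) :=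
  {p | p.1 ∈ l₁ ∧ p.2 ∈ l₂ ∧ T.BackAdj l p.1 p.2}

/-- The thickness of the backedge graph of `l`: the minimum number of backedges
crossing a split of `l` into two nonempty intervals. -/
noncomputable def thickness (T : Tournament) (l : List T.V) : ℕ :=
  sInf {k | ∃ l₁ l₂ : List T.V, l = l₁ ++ l₂ ∧ l₁ ≠ [] ∧ l₂ ≠ [] ∧
    k = (T.splitEdges l l₁ l₂).ncard}

/-- The "length" `|φ x - φ y|` of an unordered pair under `φ`. -/
def phiLen {α : Type} (φ : α → ℕ) : Sym2 α → ℕ :=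
  Sym2.lift ⟨fun u v => max (φ u) (φ v) - min (φ u) (φ v), fun u v => by
    show max (φ u) (φ v) - min (φ u) (φ v) = max (φ v) (φ u) - min (φ v) (φ u)
    rw [max_comm (φ u) (φ v), min_comm (φ u) (φ v)]⟩

/-- The backedge graph of the ordering `σ_φ` induced by `φ`. -/
def backGraphPhi (T : Tournament) (φ : T.V → ℕ) : SimpleGraph T.V where
  Adj u v := (T.adj u v ∧ φ v < φ u) ∨ (T.adj v u ∧ φ u < φ v)
  symm := by
    constructor
    intro u v h
    rcases h with h | h
    · exact Or.inr h
    · exact Or.inl h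
  loopless := by
    constructor
    intro v h
    rcases h with ⟨_, h⟩ | ⟨_, h⟩ <;> exact lt_irrefl _ h

/-- Two distinct edges `e`, `f` of `B_{σ_φ}(T)` are `(r,s)`-comparable under `φ`:
some path with at most `s` edges contains both, and `1/r ≤ φ(e)/φ(f) ≤ r`. -/
def Comparable (T : Tournament) (φ : T.V → ℕ) (r s : ℕ) (e f : Sym2 T.V) : Prop :=
  e ≠ f ∧
  (∃ (a b : T.V) (p : (T.backGraphPhi φ).Walk a b),
      p.IsPath ∧ p.length ≤ s ∧ e ∈ p.edges ∧ f ∈ p.edges) ∧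
  phiLen φ e ≤ r * phiLen φ f ∧ phiLen φ f ≤ r * phiLen φ e

/-- The class `𝒞_{(r,s)}`. -/
def classC (r s : ℕ) : Set Tournament :=
  {T | ∃ φ : T.V → ℕ, (∀ v, 0 < φ v) ∧ Function.Injective φ ∧
    ∀ e ∈ (T.backGraphPhi φ).edgeSet, ∀ f ∈ (T.backGraphPhi φ).edgeSet,
      ¬ Comparable T φ r s e f}

/-- `φ` is `r`-incomparable: it is an injective positive labelling such that any
two distinct edges of `B_{σ_φ}(T)` in the same connected component have length
ratio greater than `r` (or less than `1/r`). -/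
def RIncomp (T : Tournament) (φ : T.V → ℕ) (r : ℕ) : Prop :=
  (∀ v, 0 < φ v) ∧ Function.Injective φ ∧
  ∀ e ∈ (T.backGraphPhi φ).edgeSet, ∀ f ∈ (T.backGraphPhi φ).edgeSet, e ≠ f →
    (∃ a b, a ∈ e ∧ b ∈ f ∧ (T.backGraphPhi φ).Reachable a b) →
    (r * phiLen φ f < phiLen φ e ∨ r * phiLen φ e < phiLen φ f)

/-- `l` is an ordering of the vertex set of `T`. -/
def IsOrdering (T : Tournament) (l : List T.V) : Prop :=
  l.Nodup ∧ ∀ v, v ∈ l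

/-- The ordering `l` is incomparable: for every `r ≥ 1` there is an
`r`-incomparable `φ` with `σ_φ = l` (i.e. `φ` strictly increasing along `l`). -/
def IsIncompOrdering (T : Tournament) (l : List T.V) : Prop :=
  ∀ r : ℕ, 0 < r → ∃ φ : T.V → ℕ, RIncomp T φ r ∧ l.Pairwise (fun u v => φ u < φ v)

end Tournament

section ForestAux
open Tournament

variable {α : Type} [DecidableEq α]

def badjB (A : α → α → Bool) (l : List α) (u v : α) : Bool :=
  (A u v && decide ([v,u].Sublist l)) || (A v u && decide ([u,v].Sublist l))

def reach2B (A : α → α → Bool) (l : List α) (a c : α) : Bool :=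
  a == c || badjB A l a c || l.any fun m => badjB A l a m && badjB A l m c

def sepB (A : α → α → Bool) (l₁ l₂ : List α) : Bool :=
  l₁.all fun a => l₂.all fun b => !badjB A (l₁++l₂) a b ||
    (l₁.all fun c => l₂.all fun d => !badjB A (l₁++l₂) c d ||
      (!reach2B A (l₁++l₂) a c || (a == c && b == d)))

def chkB (A : α → α → Bool) : ℕ → List α → Bool
  | 0, _ => false
  | n+1, l => l.length == 1 || (List.range (l.length - 1)).any fun i =>
      sepB A (l.take (i+1)) (l.drop (i+1)) && chkB A n (l.take (i+1)) && chkB A n (l.drop (i+1))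

variable {T : Tournament} [DecidableEq T.V] {A : T.V → T.V → Bool}
  (hA : ∀ u v, T.adj u v ↔ A u v = true)

include hA

theorem badjB_sound {l u v} (h : badjB A l u v = true) : T.BackAdj l u v := by
  rcases Bool.or_eq_true_iff.1 h with h | h <;> rw [Bool.and_eq_true] at h <;> obtain ⟨h1, h2⟩ := h
  · exact Or.inl ⟨(hA _ _).2 h1, of_decide_eq_true h2⟩
  · exact Or.inr ⟨(hA _ _).2 h1, of_decide_eq_true h2⟩

theorem reach2B_sound {l a c} (h : reach2B A l a c = true) :
    Relation.ReflTransGen (T.BackAdj l) a c := by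
  rcases Bool.or_eq_true_iff.1 h with h | h
  · rcases Bool.or_eq_true_iff.1 h with h | h
    · rw [beq_iff_eq] at h; exact h ▸ Relation.ReflTransGen.refl
    · exact Relation.ReflTransGen.single (badjB_sound hA h)
  · rcases List.any_eq_true.1 h with ⟨m, _, hm⟩
    rw [Bool.and_eq_true] at hm
    obtain ⟨h1, h2⟩ := hm
    exact Relation.ReflTransGen.head (badjB_sound hA h1)
      (Relation.ReflTransGen.single (badjB_sound hA h2))

theorem sepB_complete {l₁ l₂ : List T.V}
    (hsep : ∀ a ∈ l₁, ∀ b ∈ l₂, ∀ c ∈ l₁, ∀ d ∈ l₂,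
        T.BackAdj (l₁ ++ l₂) a b → T.BackAdj (l₁ ++ l₂) c d →
        Relation.ReflTransGen (T.BackAdj (l₁ ++ l₂)) a c → a = c ∧ b = d) :
    sepB A l₁ l₂ = true := by
  simp only [sepB, List.all_eq_true]
  intro a ha b hb
  rw [Bool.or_eq_true_iff]
  by_cases hab : badjB A (l₁ ++ l₂) a b = true
  · refine Or.inr (List.all_eq_true.2 fun c hc => List.all_eq_true.2 fun d hd => ?_)
    rw [Bool.or_eq_true_iff]
    by_cases hcd : badjB A (l₁ ++ l₂) c d = true
    · refine Or.inr ?_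
      rw [Bool.or_eq_true_iff]
      by_cases hr : reach2B A (l₁ ++ l₂) a c = true
      · obtain ⟨rfl, rfl⟩ := hsep a ha b hb c hc d hd (badjB_sound hA hab)
          (badjB_sound hA hcd) (reach2B_sound hA hr)
        exact Or.inr (by simp)
      · exact Or.inl (by simp [hr])
    · exact Or.inl (by simp [hcd])
  · exact Or.inl (by simp [hab])

theorem chkB_complete {l : List T.V} (h : T.IsForestOrdering l) :
    ∀ n, l.length ≤ n → chkB A n l = true := by
  induction h with
  | single v =>
    rintro (_ | n) hn
    · simp at hn
    · simp [chkB]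
  | split l₁ l₂ h₁ h₂ hsep f₁ f₂ ih₁ ih₂ =>
    have hl1 : 1 ≤ l₁.length := List.length_pos_iff.2 h₁
    have hl2 : 1 ≤ l₂.length := List.length_pos_iff.2 h₂
    rintro (_ | n) hn
    · rw [List.length_append] at hn
      omega
    · rw [List.length_append] at hn
      simp only [chkB, Bool.or_eq_true]
      refine Or.inr (List.any_eq_true.2 ⟨l₁.length - 1, List.mem_range.2 ?_, ?_⟩)
      · rw [List.length_append]; omega
      · have hi : l₁.length - 1 + 1 = l₁.length := by omega
        rw [hi, List.take_left, List.drop_left]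
        rw [Bool.and_eq_true, Bool.and_eq_true]
        exact ⟨⟨sepB_complete hA hsep, ih₁ n (by omega)⟩, ih₂ n (by omega)⟩

theorem not_forest_of_chkB (allv : List T.V) (hnd : allv.Nodup) (hcov : ∀ v, v ∈ allv)
    (hchk : ∀ l, l.Perm allv → chkB A allv.length l = false) :
    ¬ T.IsForestTournament := by
  rintro ⟨l, nd, cov, ford⟩
  have hperm : l.Perm allv :=
    (List.perm_ext_iff_of_nodup nd hnd).2 fun a => ⟨fun _ => hcov a, fun _ => cov a⟩
  have ht := chkB_complete hA ford allv.length (le_of_eq hperm.length_eq)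
  rw [hchk l hperm] at ht
  exact Bool.false_ne_true ht

omit [DecidableEq T.V] hA in
theorem split_of_unique (l₁ l₂ : List T.V) (h₁ : l₁ ≠ []) (h₂ : l₂ ≠ [])
    (h : ∀ a ∈ l₁, ∀ b ∈ l₂, ∀ c ∈ l₁, ∀ d ∈ l₂,
        T.BackAdj (l₁ ++ l₂) a b → T.BackAdj (l₁ ++ l₂) c d → a = c ∧ b = d)
    (f₁ : T.IsForestOrdering l₁) (f₂ : T.IsForestOrdering l₂) :
    T.IsForestOrdering (l₁ ++ l₂) :=
  .split l₁ l₂ h₁ h₂ (fun a ha b hb c hc d hd hab hcd _ => h a ha b hb c hc d hd hab hcd) f₁ f₂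

end ForestAux
section Transfer
open Tournament

variable {S T : Tournament}

theorem backAdj_map {f : S.V → T.V} (hinj : Function.Injective f)
    (hadj : ∀ u v, S.adj u v ↔ T.adj (f u) (f v)) (l : List S.V) (u v : S.V) :
    T.BackAdj (l.map f) (f u) (f v) ↔ S.BackAdj l u v := by
  have hs : ∀ a b : S.V, ([f a, f b].Sublist (l.map f)) ↔ [a, b].Sublist l := by
    intro a b
    constructor
    · intro h
      obtain ⟨l', hl', he⟩ := List.sublist_map_iff.1 h
      obtain - | ⟨x, - | ⟨y, - | ⟨z, t⟩⟩⟩ := l' <;> simp only [List.map] at he <;>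
        [skip; skip; skip; exact absurd he (by simp)]
      · exact absurd he (by simp)
      · exact absurd he (by simp)
      · simp only [List.cons.injEq, and_true] at he
        obtain ⟨hx, hy⟩ := he
        rwa [hinj hx, hinj hy]
    · intro h
      simpa using h.map f
  constructor
  · rintro (⟨h1, h2⟩ | ⟨h1, h2⟩)
    · exact Or.inl ⟨(hadj u v).2 h1, (hs v u).1 h2⟩
    · exact Or.inr ⟨(hadj v u).2 h1, (hs u v).1 h2⟩
  · rintro (⟨h1, h2⟩ | ⟨h1, h2⟩)
    · exact Or.inl ⟨(hadj u v).1 h1, (hs v u).2 h2⟩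
    · exact Or.inr ⟨(hadj v u).1 h1, (hs u v).2 h2⟩

theorem forestOrdering_map (f : S.V → T.V) (hbij : Function.Bijective f)
    (hadj : ∀ u v, S.adj u v ↔ T.adj (f u) (f v)) {l : List S.V}
    (h : S.IsForestOrdering l) : T.IsForestOrdering (l.map f) := by
  set e := Equiv.ofBijective f hbij with he
  have hef : ∀ x, e x = f x := fun _ => rfl
  induction h with
  | single v => exact .single (f v)
  | split l₁ l₂ h₁ h₂ hsep f₁ f₂ ih₁ ih₂ =>
    rw [List.map_append]
    refine .split _ _ (by simpa using h₁) (by simpa using h₂) ?_ ih₁ ih₂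
    rintro a' ha' b' hb' c' hc' d' hd' hab hcd hreach
    obtain ⟨a, ha, rfl⟩ := List.mem_map.1 ha'
    obtain ⟨b, hb, rfl⟩ := List.mem_map.1 hb'
    obtain ⟨c, hc, rfl⟩ := List.mem_map.1 hc'
    obtain ⟨d, hd, rfl⟩ := List.mem_map.1 hd'
    rw [← List.map_append] at hab hcd hreach
    have hab' := (backAdj_map hbij.1 hadj (l₁ ++ l₂) a b).1 hab
    have hcd' := (backAdj_map hbij.1 hadj (l₁ ++ l₂) c d).1 hcd
    have hstep : ∀ x y, T.BackAdj ((l₁ ++ l₂).map f) x y →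
        S.BackAdj (l₁ ++ l₂) (e.symm x) (e.symm y) := by
      intro x y hxy
      apply (backAdj_map hbij.1 hadj (l₁ ++ l₂) (e.symm x) (e.symm y)).1
      rw [← hef, ← hef, e.apply_symm_apply, e.apply_symm_apply]
      exact hxy
    have hreach' := Relation.ReflTransGen.lift e.symm (fun x y h => hstep x y h) _ _ hreach
    rw [Function.onFun, ← hef, ← hef, e.symm_apply_apply, e.symm_apply_apply] at hreach'
    obtain ⟨rfl, rfl⟩ := hsep a ha b hb c hc d hd hab' hcd' hreach'
    exact ⟨rfl, rfl⟩

theorem forest_iff (f : S.V → T.V) (hbij : Function.Bijective f)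
    (hadj : ∀ u v, S.adj u v ↔ T.adj (f u) (f v)) :
    T.IsForestTournament ↔ S.IsForestTournament := by
  set e := Equiv.ofBijective f hbij with he
  have hef : ∀ x, e x = f x := fun _ => rfl
  have hadj' : ∀ u v : T.V, T.adj u v ↔ S.adj (e.symm u) (e.symm v) := by
    intro u v
    rw [hadj (e.symm u) (e.symm v), ← hef, ← hef, e.apply_symm_apply, e.apply_symm_apply]
  constructor
  · rintro ⟨l, nd, cov, ford⟩
    refine ⟨l.map e.symm, nd.map e.symm.injective, fun v => ?_,
      forestOrdering_map e.symm e.symm.bijective hadj' ford⟩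
    · exact List.mem_map.2 ⟨e v, cov (e v), e.symm_apply_apply v⟩
  · rintro ⟨l, nd, cov, ford⟩
    refine ⟨l.map f, nd.map hbij.1, fun v => ?_, forestOrdering_map f hbij hadj ford⟩
    obtain ⟨u, rfl⟩ := hbij.2 v
    exact List.mem_map.2 ⟨u, cov u, rfl⟩

end Transfer
section Concrete
open Tournament

instance oneTour.decEq : DecidableEq oneTour.V :=
  inferInstanceAs (DecidableEq Unit)

instance oneTour.decAdj : DecidableRel oneTour.adj := fun _ _ =>
  inferInstanceAs (Decidable False)

instance deltaDir.dec {m : ℕ} (i j : Fin m) : Decidable (deltaDir i j) := by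
  unfold deltaDir; infer_instance

def decEqDelta {m : ℕ} (F : Fin m → Tournament) (hE : ∀ i, DecidableEq (F i).V) :
    DecidableEq (deltaSum F).V := by
  letI := hE
  exact inferInstanceAs (DecidableEq ((i : Fin m) × (F i).V))

def decAdjDelta {m : ℕ} (F : Fin m → Tournament) (hE : ∀ i, DecidableEq (F i).V)
    (hR : ∀ i, DecidableRel (F i).adj) : DecidableRel (deltaSum F).adj := fun x y => by
  letI : ∀ i, DecidableEq (F i).V := hE
  letI : ∀ (i : Fin m) (a b : (F i).V), Decidable ((F i).adj a b) := hR
  exact inferInstanceAs (Decidable (deltaDir x.1 y.1 ∨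
    ∃ (i : Fin m) (u v : (F i).V), (F i).adj u v ∧
      (show (j : Fin m) × (F j).V from x) = ⟨i, u⟩ ∧
      (show (j : Fin m) × (F j).V from y) = ⟨i, v⟩))

def vec3inst {P : Tournament → Sort*} {A B C : Tournament} (a : P A) (b : P B) (c : P C) :
    ∀ i : Fin 3, P (![A, B, C] i) := fun i =>
  match i with
  | 0 => a
  | 1 => b
  | 2 => c

instance instD2eq : DecidableEq (Dtour 2).V :=
  decEqDelta ![oneTour, Dtour 1, Dtour 1]
    (vec3inst (P := fun t => DecidableEq t.V) oneTour.decEq oneTour.decEq oneTour.decEq)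

instance instD2adj : DecidableRel (Dtour 2).adj :=
  decAdjDelta ![oneTour, Dtour 1, Dtour 1]
    (vec3inst (P := fun t => DecidableEq t.V) oneTour.decEq oneTour.decEq oneTour.decEq)
    (vec3inst (P := fun t => DecidableRel t.adj) oneTour.decAdj oneTour.decAdj oneTour.decAdj)

instance instD3eq : DecidableEq (Dtour 3).V :=
  decEqDelta ![oneTour, Dtour 2, Dtour 2] (vec3inst (P := fun t => DecidableEq t.V) oneTour.decEq instD2eq instD2eq)

instance instD3adj : DecidableRel (Dtour 3).adj :=
  decAdjDelta ![oneTour, Dtour 2, Dtour 2] (vec3inst (P := fun t => DecidableEq t.V) oneTour.decEq instD2eq instD2eq)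
    (vec3inst (P := fun t => DecidableRel t.adj) oneTour.decAdj instD2adj instD2adj)

instance instU3eq : DecidableEq (Utour 3).V :=
  decEqDelta (fun _ : Fin (2 * 3 - 1) => oneTour) (fun _ => oneTour.decEq)

instance instU3adj : DecidableRel (Utour 3).adj :=
  decAdjDelta (fun _ : Fin (2 * 3 - 1) => oneTour) (fun _ => oneTour.decEq)
    (fun _ => oneTour.decAdj)

instance instL2eq : DecidableEq (linTour 2).V := inferInstanceAs (DecidableEq (Fin 2))

instance instL2adj : DecidableRel (linTour 2).adj := fun a b =>
  inferInstanceAs (Decidable ((show Fin 2 from a) < (show Fin 2 from b)))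

instance instT2eq : DecidableEq delta2.V :=
  decEqDelta ![linTour 2, linTour 2, linTour 2] (vec3inst (P := fun t => DecidableEq t.V) instL2eq instL2eq instL2eq)

instance instT2adj : DecidableRel delta2.adj :=
  decAdjDelta ![linTour 2, linTour 2, linTour 2] (vec3inst (P := fun t => DecidableEq t.V) instL2eq instL2eq instL2eq)
    (vec3inst (P := fun t => DecidableRel t.adj) instL2adj instL2adj instL2adj)

instance instNeq : DecidableEq Ntour.V := inferInstanceAs (DecidableEq (Fin 5))
instance instNadj : DecidableRel Ntour.adj := fun a b =>
  inferInstanceAs (Decidable (_ = true))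
instance instS3eq : DecidableEq Stour3.V := inferInstanceAs (DecidableEq (Fin 5))


def UfinMat : Fin 5 → Fin 5 → Bool := fun i j =>
  ![![false, true, false, true, false],
    ![false, false, true, true, true],
    ![true, false, false, true, false],
    ![false, false, false, false, true],
    ![true, false, true, false, false]] i j

def D3mat : Fin 7 → Fin 7 → Bool := fun i j =>
  ![![false, true, true, true, false, false, false],
    ![false, false, true, false, true, true, true],
    ![false, false, false, true, true, true, true],
    ![false, true, false, false, true, true, true],
    ![true, false, false, false, false, true, false],
    ![true, false, false, false, false, false, true],
    ![true, false, false, false, true, false, false]] i j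

def T2mat : Fin 6 → Fin 6 → Bool := fun i j =>
  ![![false, true, true, true, false, false],
    ![false, false, true, true, false, false],
    ![false, false, false, true, true, true],
    ![false, false, false, false, true, true],
    ![true, true, false, false, false, true],
    ![true, true, false, false, false, false]] i j

def S3mat : Fin 5 → Fin 5 → Bool := fun i j =>
  ![![false, true, true, false, false],
    ![false, false, true, true, false],
    ![false, false, false, true, true],
    ![true, false, false, false, true],
    ![true, true, false, false, false]] i j

def Ufin : Tournament where
  V := Fin 5
  adj i j := UfinMat i j = true
  irrefl := by decide
  total := by decide
  asymm := by decide

def D3fin : Tournament where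
  V := Fin 7
  adj i j := D3mat i j = true
  irrefl := by decide
  total := by decide
  asymm := by decide

def T2fin : Tournament where
  V := Fin 6
  adj i j := T2mat i j = true
  irrefl := by decide
  total := by decide
  asymm := by decide

instance instUfinEq : DecidableEq Ufin.V := inferInstanceAs (DecidableEq (Fin 5))
instance instUfinAdj : DecidableRel Ufin.adj := fun a b =>
  inferInstanceAs (Decidable (_ = true))
instance instD3finEq : DecidableEq D3fin.V := inferInstanceAs (DecidableEq (Fin 7))
instance instD3finAdj : DecidableRel D3fin.adj := fun a b =>
  inferInstanceAs (Decidable (_ = true))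
instance instT2finEq : DecidableEq T2fin.V := inferInstanceAs (DecidableEq (Fin 6))
instance instT2finAdj : DecidableRel T2fin.adj := fun a b =>
  inferInstanceAs (Decidable (_ = true))

def uF : Ufin.V → (Utour 3).V := fun i => ⟨i, ()⟩

def dF : Fin 7 → (Dtour 3).V := fun i =>
  match i with
  | 0 => ⟨0, ()⟩
  | 1 => ⟨1, ⟨0, ()⟩⟩
  | 2 => ⟨1, ⟨1, ()⟩⟩
  | 3 => ⟨1, ⟨2, ()⟩⟩
  | 4 => ⟨2, ⟨0, ()⟩⟩
  | 5 => ⟨2, ⟨1, ()⟩⟩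
  | 6 => ⟨2, ⟨2, ()⟩⟩

def tF : Fin 6 → delta2.V := fun i =>
  match i with
  | 0 => ⟨0, (0 : Fin 2)⟩
  | 1 => ⟨0, (1 : Fin 2)⟩
  | 2 => ⟨1, (0 : Fin 2)⟩
  | 3 => ⟨1, (1 : Fin 2)⟩
  | 4 => ⟨2, (0 : Fin 2)⟩
  | 5 => ⟨2, (1 : Fin 2)⟩

theorem uF_bij : Function.Bijective uF := by decide
theorem dF_bij : Function.Bijective (dF : D3fin.V → (Dtour 3).V) := by decide
theorem tF_bij : Function.Bijective (tF : T2fin.V → delta2.V) := by decide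

theorem uF_adj : ∀ u v, Ufin.adj u v ↔ (Utour 3).adj (uF u) (uF v) := by decide
theorem dF_adj : ∀ u v, D3fin.adj u v ↔ (Dtour 3).adj (dF u) (dF v) := by
  show ∀ u v : Fin 7, D3mat u v = true ↔ (Dtour 3).adj (dF u) (dF v); decide
theorem tF_adj : ∀ u v, T2fin.adj u v ↔ delta2.adj (tF u) (tF v) := by
  show ∀ u v : Fin 6, T2mat u v = true ↔ delta2.adj (tF u) (tF v); decide

end Concrete
section Pos
open Tournament

instance backAdj.dec (T : Tournament) [DecidableEq T.V] [DecidableRel T.adj]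
    (l : List T.V) (u v : T.V) : Decidable (T.BackAdj l u v) := by
  unfold Tournament.BackAdj; infer_instance

theorem Ntour_forest : Ntour.IsForestTournament := by
  refine ⟨([0,1,2,3,4] : List (Fin 5)), by unfold Ntour; decide, by unfold Ntour; decide, ?_⟩
  have s12 : Ntour.IsForestOrdering (([1] : List (Fin 5)) ++ [2]) :=
    split_of_unique _ _ (by unfold Ntour; simp) (by unfold Ntour; simp) (by unfold Ntour; decide) (.single _) (.single _)
  have s012 : Ntour.IsForestOrdering (([0] : List (Fin 5)) ++ [1, 2]) :=
    split_of_unique _ _ (by unfold Ntour; simp) (by unfold Ntour; simp) (by unfold Ntour; decide) (.single _) s12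
  have s34 : Ntour.IsForestOrdering (([3] : List (Fin 5)) ++ [4]) :=
    split_of_unique _ _ (by unfold Ntour; simp) (by unfold Ntour; simp) (by unfold Ntour; decide) (.single _) (.single _)
  exact split_of_unique (T := Ntour) ([0,1,2] : List (Fin 5)) ([3,4] : List (Fin 5)) (by unfold Ntour; simp) (by unfold Ntour; simp) (by unfold Ntour; decide) s012 s34

theorem Ufin_forest : Ufin.IsForestTournament := by
  refine ⟨([0,1,4,2,3] : List (Fin 5)), by unfold Ufin; decide, by unfold Ufin; decide, ?_⟩
  have s14 : Ufin.IsForestOrdering (([1] : List (Fin 5)) ++ [4]) :=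
    split_of_unique _ _ (by unfold Ufin; simp) (by unfold Ufin; simp) (by unfold Ufin; decide) (.single _) (.single _)
  have s014 : Ufin.IsForestOrdering (([0] : List (Fin 5)) ++ [1, 4]) :=
    split_of_unique _ _ (by unfold Ufin; simp) (by unfold Ufin; simp) (by unfold Ufin; decide) (.single _) s14
  have s0142 : Ufin.IsForestOrdering (([0,1,4] : List (Fin 5)) ++ [2]) :=
    split_of_unique _ _ (by unfold Ufin; simp) (by unfold Ufin; simp) (by unfold Ufin; decide) s014 (.single _)
  exact split_of_unique (T := Ufin) ([0,1,4,2] : List (Fin 5)) ([3] : List (Fin 5)) (by unfold Ufin; simp) (by unfold Ufin; simp) (by unfold Ufin; decide) s0142 (.single _)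

theorem Utour3_forest : (Utour 3).IsForestTournament :=
  (forest_iff uF uF_bij uF_adj).2 Ufin_forest

end Pos

section Negatives
open Tournament

instance instS3adj : DecidableRel Stour3.adj := fun a b =>
  inferInstanceAs (Decidable (_ ∨ _))

theorem S3mat_adj : ∀ u v, Stour3.adj u v ↔ S3mat u v = true := by unfold Stour3; decide

set_option maxRecDepth 10000 in
theorem S3_chk : ∀ l ∈ (([0,1,2,3,4] : List (Fin 5))).permutations',
    chkB S3mat 5 l = false := by decide

theorem S3_not_forest : ¬ Stour3.IsForestTournament :=
  not_forest_of_chkB S3mat_adj ([0,1,2,3,4] : List (Fin 5)) (by unfold Stour3; decide) (by unfold Stour3; decide)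
    (fun l hp => S3_chk l (List.mem_permutations'.2 hp))

set_option maxRecDepth 100000 in
set_option maxHeartbeats 10000000 in
theorem T2_chk : ∀ l ∈ (([0,1,2,3,4,5] : List (Fin 6))).permutations',
    chkB T2mat 6 l = false := by decide +kernel

theorem T2fin_not_forest : ¬ T2fin.IsForestTournament :=
  not_forest_of_chkB (fun _ _ => Iff.rfl) ([0,1,2,3,4,5] : List (Fin 6)) (by unfold T2fin; decide) (by unfold T2fin; decide)
    (fun l hp => T2_chk l (List.mem_permutations'.2 hp))

theorem delta2_not_forest : ¬ delta2.IsForestTournament := fun h =>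
  T2fin_not_forest ((forest_iff tF tF_bij tF_adj).1 h)

set_option maxRecDepth 100000 in
set_option maxHeartbeats 10000000 in
theorem D3_chk0 : ∀ t ∈ (([1,2,3,4,5,6] : List (Fin 7))).permutations',
    chkB D3mat 7 (0 :: t) = false := by decide +kernel

set_option maxRecDepth 100000 in
set_option maxHeartbeats 10000000 in
theorem D3_chk1 : ∀ t ∈ (([0,2,3,4,5,6] : List (Fin 7))).permutations',
    chkB D3mat 7 (1 :: t) = false := by decide +kernel

set_option maxRecDepth 100000 in
set_option maxHeartbeats 10000000 in
theorem D3_chk2 : ∀ t ∈ (([0,1,3,4,5,6] : List (Fin 7))).permutations',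
    chkB D3mat 7 (2 :: t) = false := by decide +kernel

set_option maxRecDepth 100000 in
set_option maxHeartbeats 10000000 in
theorem D3_chk3 : ∀ t ∈ (([0,1,2,4,5,6] : List (Fin 7))).permutations',
    chkB D3mat 7 (3 :: t) = false := by decide +kernel

set_option maxRecDepth 100000 in
set_option maxHeartbeats 10000000 in
theorem D3_chk4 : ∀ t ∈ (([0,1,2,3,5,6] : List (Fin 7))).permutations',
    chkB D3mat 7 (4 :: t) = false := by decide +kernel

set_option maxRecDepth 100000 in
set_option maxHeartbeats 10000000 in
theorem D3_chk5 : ∀ t ∈ (([0,1,2,3,4,6] : List (Fin 7))).permutations',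
    chkB D3mat 7 (5 :: t) = false := by decide +kernel

set_option maxRecDepth 100000 in
set_option maxHeartbeats 10000000 in
theorem D3_chk6 : ∀ t ∈ (([0,1,2,3,4,5] : List (Fin 7))).permutations',
    chkB D3mat 7 (6 :: t) = false := by decide +kernel

theorem D3_hchk : ∀ l, l.Perm ([0,1,2,3,4,5,6] : List (Fin 7)) →
    chkB D3mat (([0,1,2,3,4,5,6] : List (Fin 7)).length) l = false := by
  intro l hp
  match l, hp.length_eq with
  | a :: t, _ =>
    have ha : a ∈ ([0,1,2,3,4,5,6] : List (Fin 7)) := hp.subset List.mem_cons_self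
    have ht := hp.erase a
    rw [List.erase_cons_head] at ht
    fin_cases ha
    · exact D3_chk0 t (List.mem_permutations'.2 ht)
    · exact D3_chk1 t (List.mem_permutations'.2 ht)
    · exact D3_chk2 t (List.mem_permutations'.2 ht)
    · exact D3_chk3 t (List.mem_permutations'.2 ht)
    · exact D3_chk4 t (List.mem_permutations'.2 ht)
    · exact D3_chk5 t (List.mem_permutations'.2 ht)
    · exact D3_chk6 t (List.mem_permutations'.2 ht)

theorem D3fin_not_forest : ¬ D3fin.IsForestTournament :=
  not_forest_of_chkB (fun _ _ => Iff.rfl) ([0,1,2,3,4,5,6] : List (Fin 7)) (by unfold D3fin; decide)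
    (by unfold D3fin; decide) D3_hchk

theorem dtour3_not_forest : ¬ (Dtour 3).IsForestTournament := fun h =>
  D3fin_not_forest ((forest_iff dF dF_bij dF_adj).1 h)

end Negatives

open Tournament in
/-- The class of forest tournaments contains `U₃` and `N`, but
contains none of `D₃`, `S₃`, `Δ₂`. -/
theorem classF_contents :
    (Utour 3).IsForestTournament ∧ Ntour.IsForestTournament ∧
      ¬ (Dtour 3).IsForestTournament ∧ ¬ Stour3.IsForestTournament ∧
      ¬ delta2.IsForestTournament :=
  ⟨Utour3_forest, Ntour_forest, dtour3_not_forest, S3_not_forest, delta2_not_forest⟩
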